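/- Let M be a rank set with intervals [a_1,b_1],...,[a_k,b_k] ⊆ [n], b_1 < ... < b_k, and let f_M be the associated bounded affine permutation. Then the number of inversions of f_M (pairs i < j in a fundamental domain with f_M(i) > f_M(j), counted modulo the shift equivalence) equals k(n-k) - ∑_{S ∈ M} (#S - #S(M)), where #S = b_i - a_i + 1 for S = [a_i, b_i] and #S(M) is the number of intervals of M contained in S. -/

import Mathlib

/-- The number of inversions of the affine permutation `f_M` of a rank set `M`
equals `k(n-k) - ∑_{S ∈ M} (#S - #S(M))`. -/
theorem stmt5 (n k : ℕ) (a b : Fin k → ℕ)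
    (ha1 : ∀ i, 1 ≤ a i) (hab : ∀ i, a i ≤ b i) (hbn : ∀ i, b i ≤ n)
    (hainj : Function.Injective a) (hbmono : StrictMono b)
    (c d : Fin (n - k) → ℕ)
    (hcmono : StrictMono c) (hdmono : StrictMono d)
    (hcrange : ∀ x : ℕ, (∃ i, c i = x) ↔ (1 ≤ x ∧ x ≤ n ∧ ∀ j, a j ≠ x))
    (hdrange : ∀ x : ℕ, (∃ i, d i = x) ↔ (1 ≤ x ∧ x ≤ n ∧ ∀ j, b j ≠ x))
    (f : ℤ → ℤ) (hbij : Function.Bijective f)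
    (hper : ∀ i : ℤ, f (i + n) = f i + n)
    (hbound : ∀ i : ℤ, i ≤ f i ∧ f i ≤ i + n)
    (hfb : ∀ i, f (b i) = a i + n)
    (hfd : ∀ i, f (d i) = c i) :
    (Set.ncard {p : ℤ × ℤ | 1 ≤ p.1 ∧ p.1 ≤ (n : ℤ) ∧ p.1 < p.2 ∧ f p.2 < f p.1} : ℤ) =
      (k : ℤ) * ((n : ℤ) - k) -
        ∑ i : Fin k,
          (((b i : ℤ) - (a i : ℤ) + 1) -
            ((Finset.univ.filter fun j : Fin k => a i ≤ a j ∧ b j ≤ b i).card : ℤ)) := by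
  classical
  have hd1 : ∀ t, 1 ≤ d t := fun t => ((hdrange (d t)).mp ⟨t, rfl⟩).1
  have hdn : ∀ t, d t ≤ n := fun t => ((hdrange (d t)).mp ⟨t, rfl⟩).2.1
  have hdb : ∀ t j, b j ≠ d t := fun t => ((hdrange (d t)).mp ⟨t, rfl⟩).2.2
  have hc1 : ∀ t, 1 ≤ c t := fun t => ((hcrange (c t)).mp ⟨t, rfl⟩).1
  have hcn : ∀ t, c t ≤ n := fun t => ((hcrange (c t)).mp ⟨t, rfl⟩).2.1
  have hca : ∀ t j, a j ≠ c t := fun t => ((hcrange (c t)).mp ⟨t, rfl⟩).2.2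
  have hdc : ∀ t, d t ≤ c t := by
    intro t
    have h := (hbound (d t)).1
    rw [hfd t] at h
    exact_mod_cast h
  have hcover : ∀ x : ℤ, 1 ≤ x → x ≤ (n : ℤ) →
      (∃ s, ((b s : ℕ) : ℤ) = x) ∨ (∃ t, ((d t : ℕ) : ℤ) = x) := by
    intro x h1 h2
    lift x to ℕ using by linarith
    by_cases h : ∃ s, b s = x
    · obtain ⟨s, hs⟩ := h; exact Or.inl ⟨s, by exact_mod_cast hs⟩
    · push_neg at h
      obtain ⟨t, ht⟩ := (hdrange x).mpr ⟨by exact_mod_cast h1, by exact_mod_cast h2, h⟩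
      exact Or.inr ⟨t, by exact_mod_cast ht⟩
  -- the three families of inversions starting at b s
  set T : Fin k → Finset ℤ := fun s =>
    ((Finset.univ.filter fun t : Fin k => a t < a s ∧ b s < b t).image fun t => ((b t : ℕ) : ℤ)) ∪
    ((Finset.univ.filter fun t : Fin (n - k) => b s < d t).image fun t => ((d t : ℕ) : ℤ)) ∪
    ((Finset.univ.filter fun t : Fin (n - k) => c t < a s).image fun t => ((d t : ℕ) : ℤ) + n)
    with hTdef
  set F : Finset (ℤ × ℤ) :=
    Finset.univ.biUnion (fun s : Fin k => (T s).image fun j => (((b s : ℕ) : ℤ), j)) with hFdef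
  have hmemT : ∀ (s : Fin k) (j : ℤ), j ∈ T s ↔
      ((∃ t, (a t < a s ∧ b s < b t) ∧ ((b t : ℕ) : ℤ) = j) ∨
       (∃ t, b s < d t ∧ ((d t : ℕ) : ℤ) = j) ∨
       (∃ t, c t < a s ∧ ((d t : ℕ) : ℤ) + (n : ℤ) = j)) := by
    intro s j
    simp [hTdef, Finset.mem_union, Finset.mem_image, Finset.mem_filter, or_assoc]
  have hmemF : ∀ p : ℤ × ℤ, p ∈ F ↔ ∃ s : Fin k, ∃ j ∈ T s, (((b s : ℕ) : ℤ), j) = p := by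
    intro p
    simp [hFdef, Finset.mem_biUnion, Finset.mem_image]
  have hset : {p : ℤ × ℤ | 1 ≤ p.1 ∧ p.1 ≤ (n : ℤ) ∧ p.1 < p.2 ∧ f p.2 < f p.1} = ↑F := by
    ext ⟨i, j⟩
    simp only [Set.mem_setOf_eq, Finset.mem_coe, hmemF]
    constructor
    · rintro ⟨h1, h2, h3, h4⟩
      rcases hcover i h1 h2 with ⟨s, rfl⟩ | ⟨t, rfl⟩
      · -- i = b s
        refine ⟨s, j, ?_, rfl⟩
        rw [hmemT]
        rw [hfb s] at h4
        have hjlt : j < (a s : ℤ) + n := lt_of_le_of_lt (hbound j).1 h4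
        by_cases hjn : j ≤ (n : ℤ)
        · have hj1 : (1 : ℤ) ≤ j := by linarith
          rcases hcover j hj1 hjn with ⟨t, rfl⟩ | ⟨t, rfl⟩
          · refine Or.inl ⟨t, ⟨?_, ?_⟩, rfl⟩
            · rw [hfb t] at h4
              have : (a t : ℤ) < a s := by linarith
              exact_mod_cast this
            · exact_mod_cast h3
          · exact Or.inr (Or.inl ⟨t, by exact_mod_cast h3, rfl⟩)
        · push_neg at hjn
          have h5 : (1 : ℤ) ≤ j - n := by linarith
          have h6 : j - n ≤ (n : ℤ) := by
            have h7 : (a s : ℤ) ≤ n := by exact_mod_cast le_trans (hab s) (hbn s)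
            linarith
          have hj : j = (j - n) + n := by ring
          rcases hcover (j - n) h5 h6 with ⟨t, ht⟩ | ⟨t, ht⟩
          · exfalso
            have : f j = ((a t : ℤ) + n) + n := by
              rw [hj, ← ht, hper, hfb t]
            rw [this] at h4
            have h8 : (a s : ℤ) ≤ n := by exact_mod_cast le_trans (hab s) (hbn s)
            have h9 : (1 : ℤ) ≤ a t := by exact_mod_cast ha1 t
            linarith
          · refine Or.inr (Or.inr ⟨t, ?_, by linarith [ht]⟩)
            have : f j = (c t : ℤ) + n := by rw [hj, ← ht, hper, hfd t]
            rw [this] at h4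
            have : (c t : ℤ) < a s := by linarith
            exact_mod_cast this
      · -- i = d t : impossible
        exfalso
        rw [hfd t] at h4
        have hjlt : j < (c t : ℤ) := lt_of_le_of_lt (hbound j).1 h4
        have hj1 : (1 : ℤ) ≤ j := by linarith
        have hjn : j ≤ (n : ℤ) := by
          have : (c t : ℤ) ≤ n := by exact_mod_cast hcn t
          linarith
        rcases hcover j hj1 hjn with ⟨u, rfl⟩ | ⟨u, rfl⟩
        · rw [hfb u] at h4
          have h8 : (1 : ℤ) ≤ a u := by exact_mod_cast ha1 u
          have h9 : (c t : ℤ) ≤ n := by exact_mod_cast hcn t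
          linarith
        · rw [hfd u] at h4
          have h8 : d t < d u := by exact_mod_cast h3
          have h9 : t < u := hdmono.lt_iff_lt.mp h8
          have h10 : c t < c u := hcmono h9
          have h11 : (c u : ℤ) < c t := h4
          have : (c t : ℤ) < c u := by exact_mod_cast h10
          linarith
    · rintro ⟨s, x, hx, heq⟩
      obtain ⟨h1, h2⟩ := Prod.mk.inj heq
      subst h1; subst h2
      rw [hmemT] at hx
      have hbs1 : (1 : ℤ) ≤ (b s : ℕ) := by exact_mod_cast le_trans (ha1 s) (hab s)
      have hbsn : ((b s : ℕ) : ℤ) ≤ n := by exact_mod_cast hbn s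
      refine ⟨hbs1, hbsn, ?_, ?_⟩
      · rcases hx with ⟨t, ⟨_, h⟩, rfl⟩ | ⟨t, h, rfl⟩ | ⟨t, h, rfl⟩
        · exact_mod_cast h
        · exact_mod_cast h
        · have : (1 : ℤ) ≤ (d t : ℕ) := by exact_mod_cast hd1 t
          linarith
      · rcases hx with ⟨t, ⟨h, _⟩, rfl⟩ | ⟨t, h, rfl⟩ | ⟨t, h, rfl⟩
        · rw [hfb t, hfb s]
          have : (a t : ℤ) < a s := by exact_mod_cast h
          linarith
        · rw [hfd t, hfb s]
          have h1 : (c t : ℤ) ≤ n := by exact_mod_cast hcn t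
          have h2 : (1 : ℤ) ≤ a s := by exact_mod_cast ha1 s
          linarith
        · rw [hper, hfd t, hfb s]
          have : (c t : ℤ) < a s := by exact_mod_cast h
          linarith
  have hbinjZ : Function.Injective fun t : Fin k => ((b t : ℕ) : ℤ) :=
    fun x y h => hbmono.injective (by simpa using congrArg Int.toNat h)
  have hdinjZ : Function.Injective fun t : Fin (n - k) => ((d t : ℕ) : ℤ) :=
    fun x y h => hdmono.injective (by simpa using congrArg Int.toNat h)
  have hdinjZ' : Function.Injective fun t : Fin (n - k) => ((d t : ℕ) : ℤ) + n :=
    fun x y h => hdinjZ (by simpa using h)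
  have hTcard : ∀ s : Fin k, (T s).card =
      (Finset.univ.filter fun t : Fin k => a t < a s ∧ b s < b t).card +
      (Finset.univ.filter fun t : Fin (n - k) => b s < d t).card +
      (Finset.univ.filter fun t : Fin (n - k) => c t < a s).card := by
    intro s
    rw [hTdef]
    have hd12 : Disjoint
        ((Finset.univ.filter fun t : Fin k => a t < a s ∧ b s < b t).image fun t => ((b t : ℕ) : ℤ))
        ((Finset.univ.filter fun t : Fin (n - k) => b s < d t).image fun t => ((d t : ℕ) : ℤ)) := by
      rw [Finset.disjoint_left]
      rintro x hx1 hx2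
      obtain ⟨t1, -, h1⟩ := Finset.mem_image.mp hx1
      obtain ⟨t2, -, h2⟩ := Finset.mem_image.mp hx2
      have : b t1 = d t2 := by rw [← h2] at h1; exact_mod_cast h1
      exact hdb t2 t1 this
    have hd3 : Disjoint
        ((((Finset.univ.filter fun t : Fin k => a t < a s ∧ b s < b t).image fun t => ((b t : ℕ) : ℤ)) ∪
          ((Finset.univ.filter fun t : Fin (n - k) => b s < d t).image fun t => ((d t : ℕ) : ℤ))))
        ((Finset.univ.filter fun t : Fin (n - k) => c t < a s).image fun t => ((d t : ℕ) : ℤ) + n) := by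
      rw [Finset.disjoint_left]
      rintro x hx1 hx2
      obtain ⟨t3, -, h3⟩ := Finset.mem_image.mp hx2
      have hx3 : (n : ℤ) < x := by
        have : (1 : ℤ) ≤ (d t3 : ℕ) := by exact_mod_cast hd1 t3
        linarith [h3.symm ▸ (by linarith : (n : ℤ) < ((d t3 : ℕ) : ℤ) + n)]
      rcases Finset.mem_union.mp hx1 with hx | hx
      · obtain ⟨t1, -, h1⟩ := Finset.mem_image.mp hx
        have : x ≤ (n : ℤ) := by rw [← h1]; exact_mod_cast hbn t1
        linarith
      · obtain ⟨t2, -, h2⟩ := Finset.mem_image.mp hx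
        have : x ≤ (n : ℤ) := by rw [← h2]; exact_mod_cast hdn t2
        linarith
    rw [Finset.card_union_of_disjoint hd3, Finset.card_union_of_disjoint hd12,
      Finset.card_image_of_injective _ hbinjZ, Finset.card_image_of_injective _ hdinjZ,
      Finset.card_image_of_injective _ hdinjZ']
  have hFcard : F.card = ∑ s : Fin k,
      ((Finset.univ.filter fun t : Fin k => a t < a s ∧ b s < b t).card +
       (Finset.univ.filter fun t : Fin (n - k) => b s < d t).card +
       (Finset.univ.filter fun t : Fin (n - k) => c t < a s).card) := by
    rw [hFdef, Finset.card_biUnion]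
    · refine Finset.sum_congr rfl fun s _ => ?_
      rw [Finset.card_image_of_injective _ (fun x y h => (Prod.mk.inj h).2), hTcard s]
    · intro s _ s' _ hss
      rw [Function.onFun, Finset.disjoint_left]
      rintro p hp1 hp2
      obtain ⟨j1, -, h1⟩ := Finset.mem_image.mp hp1
      obtain ⟨j2, -, h2⟩ := Finset.mem_image.mp hp2
      have : ((b s : ℕ) : ℤ) = ((b s' : ℕ) : ℤ) := by
        rw [← h2] at h1; exact (Prod.mk.inj h1).1
      exact hss (hbinjZ this)
  -- counting lemma 1 : complements above b s
  have count1 : ∀ s : Fin k,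
      ((Finset.univ.filter fun t : Fin (n - k) => b s < d t).card : ℤ) =
        (n : ℤ) - (b s : ℤ) - ((Finset.univ.filter fun t : Fin k => b s < b t).card : ℤ) := by
    intro s
    have hEq : Finset.Ioc (b s) n =
        ((Finset.univ.filter fun t : Fin (n - k) => b s < d t).image d) ∪
        ((Finset.univ.filter fun t : Fin k => b s < b t).image b) := by
      ext x
      simp only [Finset.mem_Ioc, Finset.mem_union, Finset.mem_image, Finset.mem_filter,
        Finset.mem_univ, true_and]
      constructor
      · rintro ⟨h1, h2⟩
        by_cases h : ∃ t, b t = x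
        · obtain ⟨t, rfl⟩ := h; exact Or.inr ⟨t, h1, rfl⟩
        · push_neg at h
          obtain ⟨t, rfl⟩ := (hdrange x).mpr ⟨by omega, h2, h⟩
          exact Or.inl ⟨t, h1, rfl⟩
      · rintro (⟨t, h, rfl⟩ | ⟨t, h, rfl⟩)
        · exact ⟨h, hdn t⟩
        · exact ⟨h, hbn t⟩
    have hdisj : Disjoint
        ((Finset.univ.filter fun t : Fin (n - k) => b s < d t).image d)
        ((Finset.univ.filter fun t : Fin k => b s < b t).image b) := by
      rw [Finset.disjoint_left]
      rintro x hx1 hx2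
      obtain ⟨t1, -, h1⟩ := Finset.mem_image.mp hx1
      obtain ⟨t2, -, h2⟩ := Finset.mem_image.mp hx2
      exact hdb t1 t2 (h2.trans h1.symm)
    have hcards := congrArg Finset.card hEq
    rw [Nat.card_Ioc, Finset.card_union_of_disjoint hdisj,
      Finset.card_image_of_injective _ hdmono.injective,
      Finset.card_image_of_injective _ hbmono.injective] at hcards
    have hbsn : b s ≤ n := hbn s
    omega
  -- counting lemma 2 : complements below a s
  have count2 : ∀ s : Fin k,
      ((Finset.univ.filter fun t : Fin (n - k) => c t < a s).card : ℤ) =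
        (a s : ℤ) - 1 - ((Finset.univ.filter fun t : Fin k => a t < a s).card : ℤ) := by
    intro s
    have hasn : a s ≤ n := le_trans (hab s) (hbn s)
    have hEq : Finset.Ico 1 (a s) =
        ((Finset.univ.filter fun t : Fin (n - k) => c t < a s).image c) ∪
        ((Finset.univ.filter fun t : Fin k => a t < a s).image a) := by
      ext x
      simp only [Finset.mem_Ico, Finset.mem_union, Finset.mem_image, Finset.mem_filter,
        Finset.mem_univ, true_and]
      constructor
      · rintro ⟨h1, h2⟩
        by_cases h : ∃ t, a t = x
        · obtain ⟨t, rfl⟩ := h; exact Or.inr ⟨t, h2, rfl⟩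
        · push_neg at h
          obtain ⟨t, rfl⟩ := (hcrange x).mpr ⟨h1, by omega, h⟩
          exact Or.inl ⟨t, h2, rfl⟩
      · rintro (⟨t, h, rfl⟩ | ⟨t, h, rfl⟩)
        · exact ⟨hc1 t, h⟩
        · exact ⟨ha1 t, h⟩
    have hdisj : Disjoint
        ((Finset.univ.filter fun t : Fin (n - k) => c t < a s).image c)
        ((Finset.univ.filter fun t : Fin k => a t < a s).image a) := by
      rw [Finset.disjoint_left]
      rintro x hx1 hx2
      obtain ⟨t1, -, h1⟩ := Finset.mem_image.mp hx1
      obtain ⟨t2, -, h2⟩ := Finset.mem_image.mp hx2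
      exact hca t1 t2 (h2.trans h1.symm)
    have hcards := congrArg Finset.card hEq
    rw [Nat.card_Ico, Finset.card_union_of_disjoint hdisj,
      Finset.card_image_of_injective _ hcmono.injective,
      Finset.card_image_of_injective _ hainj] at hcards
    have has1 : 1 ≤ a s := ha1 s
    omega
  -- swap symmetry for the double filters
  have hswapX : ∑ s : Fin k, ((Finset.univ.filter fun t : Fin k => a t < a s ∧ b s < b t).card : ℤ) =
      ∑ s : Fin k, ((Finset.univ.filter fun t : Fin k => a s < a t ∧ b t < b s).card : ℤ) := by
    have : ∑ s : Fin k, (Finset.univ.filter fun t : Fin k => a t < a s ∧ b s < b t).card =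
        ∑ s : Fin k, (Finset.univ.filter fun t : Fin k => a s < a t ∧ b t < b s).card := by
      simp only [Finset.card_filter]
      exact Finset.sum_comm
    exact_mod_cast congrArg (Nat.cast : ℕ → ℤ) this
  have hswapA : ∑ s : Fin k, (Finset.univ.filter fun t : Fin k => a t < a s).card =
      ∑ s : Fin k, (Finset.univ.filter fun t : Fin k => a s < a t).card := by
    simp only [Finset.card_filter]
    exact Finset.sum_comm
  have hswapB : ∑ s : Fin k, (Finset.univ.filter fun t : Fin k => b t < b s).card =
      ∑ s : Fin k, (Finset.univ.filter fun t : Fin k => b s < b t).card := by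
    simp only [Finset.card_filter]
    exact Finset.sum_comm
  -- trichotomy counts
  have htri : ∀ (g : Fin k → ℕ), Function.Injective g → ∀ s : Fin k,
      (Finset.univ.filter fun t : Fin k => g t < g s).card +
      (Finset.univ.filter fun t : Fin k => g s < g t).card = k - 1 := by
    intro g hg s
    have hun : (Finset.univ.filter fun t : Fin k => g t < g s) ∪
        (Finset.univ.filter fun t : Fin k => g s < g t) = Finset.univ.erase s := by
      ext t
      simp only [Finset.mem_union, Finset.mem_filter, Finset.mem_univ, true_and,
        Finset.mem_erase, and_true]
      constructor
      · rintro (h | h) <;> exact fun e => absurd (congrArg g e) (by omega)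
      · intro h
        rcases lt_or_gt_of_ne (fun e : g t = g s => h (hg e)) with h' | h'
        · exact Or.inl h'
        · exact Or.inr h'
    have hdisj : Disjoint (Finset.univ.filter fun t : Fin k => g t < g s)
        (Finset.univ.filter fun t : Fin k => g s < g t) := by
      rw [Finset.disjoint_left]
      intro t h1 h2
      simp only [Finset.mem_filter] at h1 h2
      omega
    have := congrArg Finset.card hun
    rw [Finset.card_union_of_disjoint hdisj, Finset.card_erase_of_mem (Finset.mem_univ s),
      Finset.card_univ, Fintype.card_fin] at this
    exact this
  have hkk : k * (k - 1) + k = k * k := by cases k with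
    | zero => simp
    | succ m => simp [Nat.mul_sub_one]; ring
  have h2A : 2 * ∑ s : Fin k, ((Finset.univ.filter fun t : Fin k => a t < a s).card : ℤ) =
      ((k * (k - 1) : ℕ) : ℤ) := by
    have h1 : ∑ s : Fin k, ((Finset.univ.filter fun t : Fin k => a t < a s).card +
        (Finset.univ.filter fun t : Fin k => a s < a t).card) = ∑ _s : Fin k, (k - 1) :=
      Finset.sum_congr rfl fun s _ => htri a hainj s
    rw [Finset.sum_add_distrib, ← hswapA, Finset.sum_const, Finset.card_univ, Fintype.card_fin,
      smul_eq_mul] at h1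
    have : 2 * ∑ s : Fin k, (Finset.univ.filter fun t : Fin k => a t < a s).card = k * (k - 1) := by
      omega
    exact_mod_cast congrArg (Nat.cast : ℕ → ℤ) this
  have h2B : 2 * ∑ s : Fin k, ((Finset.univ.filter fun t : Fin k => b s < b t).card : ℤ) =
      ((k * (k - 1) : ℕ) : ℤ) := by
    have h1 : ∑ s : Fin k, ((Finset.univ.filter fun t : Fin k => b t < b s).card +
        (Finset.univ.filter fun t : Fin k => b s < b t).card) = ∑ _s : Fin k, (k - 1) :=
      Finset.sum_congr rfl fun s _ => htri b hbmono.injective s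
    rw [Finset.sum_add_distrib, hswapB, Finset.sum_const, Finset.card_univ, Fintype.card_fin,
      smul_eq_mul] at h1
    have : 2 * ∑ s : Fin k, (Finset.univ.filter fun t : Fin k => b s < b t).card = k * (k - 1) := by
      omega
    exact_mod_cast congrArg (Nat.cast : ℕ → ℤ) this
  have hCk : ((k * (k - 1) : ℕ) : ℤ) + (k : ℤ) = (k : ℤ) * k := by exact_mod_cast hkk
  -- rewrite the right-hand side filter
  have hRHS : ∀ s : Fin k,
      ((Finset.univ.filter fun j : Fin k => a s ≤ a j ∧ b j ≤ b s).card : ℤ) =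
        1 + ((Finset.univ.filter fun j : Fin k => a s < a j ∧ b j < b s).card : ℤ) := by
    intro s
    have hins : (Finset.univ.filter fun j : Fin k => a s ≤ a j ∧ b j ≤ b s) =
        insert s (Finset.univ.filter fun j : Fin k => a s < a j ∧ b j < b s) := by
      ext t
      simp only [Finset.mem_filter, Finset.mem_univ, true_and, Finset.mem_insert]
      constructor
      · rintro ⟨h1, h2⟩
        by_cases h : t = s
        · exact Or.inl h
        · refine Or.inr ⟨lt_of_le_of_ne h1 fun e => h (hainj e.symm), lt_of_le_of_ne h2 fun e => h (hbmono.injective e)⟩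
      · rintro (rfl | ⟨h1, h2⟩)
        · exact ⟨le_refl _, le_refl _⟩
        · exact ⟨h1.le, h2.le⟩
    rw [hins, Finset.card_insert_of_notMem (by simp)]
    push_cast
    ring
  -- assemble
  have hR : ∑ i : Fin k, (((b i : ℤ) - (a i : ℤ) + 1) -
        ((Finset.univ.filter fun j : Fin k => a i ≤ a j ∧ b j ≤ b i).card : ℤ)) =
      ∑ i : Fin k, (((b i : ℤ) - (a i : ℤ) + 1) -
        (1 + ((Finset.univ.filter fun j : Fin k => a i < a j ∧ b j < b i).card : ℤ))) :=
    Finset.sum_congr rfl fun s _ => by rw [hRHS s]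
  rw [hset, Set.ncard_coe_finset, hFcard, hR]
  push_cast
  have hL : ∑ s : Fin k,
      (((Finset.univ.filter fun t : Fin k => a t < a s ∧ b s < b t).card : ℤ) +
       ((Finset.univ.filter fun t : Fin (n - k) => b s < d t).card : ℤ) +
       ((Finset.univ.filter fun t : Fin (n - k) => c t < a s).card : ℤ)) =
      ∑ s : Fin k,
      (((Finset.univ.filter fun t : Fin k => a t < a s ∧ b s < b t).card : ℤ) +
       ((n : ℤ) - (b s : ℤ) - ((Finset.univ.filter fun t : Fin k => b s < b t).card : ℤ)) +
       ((a s : ℤ) - 1 - ((Finset.univ.filter fun t : Fin k => a t < a s).card : ℤ))) :=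
    Finset.sum_congr rfl fun s _ => by rw [count1 s, count2 s]
  rw [hL]
  simp only [Finset.sum_add_distrib, Finset.sum_sub_distrib, Finset.sum_const,
    Finset.card_univ, Fintype.card_fin, nsmul_eq_mul]
  ring_nf
  ring_nf at h2A h2B hCk
  linarith [h2A, h2B, hCk, hswapX]
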